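/- Let b ∈ ℝ⟦s,λ⟧ be defined as follows: with Tutte's series τ, set r := s·(1+λs)^{−1} + τ(λ), let g ∈ ℝ⟦s,λ⟧ be the unique formal power series with constant coefficient 1 satisfying g² = (1+r)² − 4s, and set b := s + (1+λs)·g. Writing b = Σ_{l=0}^∞ B_l(s)·λˡ with B_l ∈ ℝ⟦s⟧ under the identification ℝ⟦s,λ⟧ ≅ (ℝ⟦s⟧)⟦λ⟧, each B_l is a polynomial in s of degree at most 2l. -/

import Mathlib

/- We realize `ℝ⟦s,λ⟧` as the iterated power series ring `(ℝ⟦s⟧)⟦λ⟧`: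
the inner variable is `s` and the outer variable is `λ`. -/

/-- The variable `s` in `(ℝ⟦s⟧)⟦λ⟧`. -/
noncomputable def sVar : PowerSeries (PowerSeries ℝ) :=
  PowerSeries.C (R := PowerSeries ℝ) PowerSeries.X

/-- The variable `λ` in `(ℝ⟦s⟧)⟦λ⟧`. -/
noncomputable def lVar : PowerSeries (PowerSeries ℝ) :=
  PowerSeries.X

/-- Tutte's series `τ(λ) = Σ_{i≥1} [2·(4i+1)! / ((i+1)!·(3i+2)!)]·λⁱ`,
viewed in `(ℝ⟦s⟧)⟦λ⟧`. -/
noncomputable def tutteSeries : PowerSeries (PowerSeries ℝ) :=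
  PowerSeries.mk fun i =>
    if i = 0 then 0
    else PowerSeries.C (R := ℝ)
      (2 * (Nat.factorial (4 * i + 1) : ℝ) /
        ((Nat.factorial (i + 1) : ℝ) * (Nat.factorial (3 * i + 2) : ℝ)))

open PowerSeries
noncomputable section

abbrev S := PowerSeries ℝ
def cT : ℕ → S
  | 0 => 1
  | n+1 => 1 + X * (cT n)^4

lemma cT_dvd (n : ℕ) : (X:S)^(n+1) ∣ cT (n+1) - cT n := by
  induction n with
  | zero => simp [cT]
  | succ n ih =>
    obtain ⟨k, hk⟩ := ih
    refine ⟨k * ((cT (n+1))^3 + (cT (n+1))^2*(cT n) + (cT (n+1))*(cT n)^2 + (cT n)^3), ?_⟩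
    have h1 : cT (n+2) - cT (n+1) = X * ((cT (n+1))^4 - (cT n)^4) := by
      simp only [cT]; ring
    have h2 : (cT (n+1))^4 - (cT n)^4 = (cT (n+1) - cT n) *
      ((cT (n+1))^3 + (cT (n+1))^2*(cT n) + (cT (n+1))*(cT n)^2 + (cT n)^3) := by ring
    rw [h1, h2, hk]; ring

def cser : S := PowerSeries.mk fun k => coeff (R := ℝ) k (cT k)

lemma coeff_cser (k : ℕ) : coeff (R := ℝ) k cser = coeff (R := ℝ) k (cT k) := by
  simp [cser]

lemma cT_stab {k n : ℕ} (h : k ≤ n) : coeff (R := ℝ) k (cT n) = coeff (R := ℝ) k (cT k) := by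
  induction n with
  | zero => cases Nat.le_zero.mp h; rfl
  | succ n ih =>
    rcases Nat.lt_or_ge k (n+1) with h'|h'
    · have hd := cT_dvd n
      rw [PowerSeries.X_pow_dvd_iff] at hd
      have h0 := hd k h'
      rw [map_sub, sub_eq_zero] at h0
      rw [h0]; exact ih (by omega)
    · have : k = n+1 := by omega
      subst this; rfl

lemma cser_trunc (n : ℕ) : (X:S)^(n+1) ∣ cser - cT n := by
  rw [PowerSeries.X_pow_dvd_iff]
  intro m hm
  rw [map_sub, coeff_cser, cT_stab (Nat.lt_succ_iff.mp hm), sub_eq_zero]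

lemma hc : cser = 1 + X * cser^4 := by
  ext k
  obtain ⟨d, hd⟩ := cser_trunc k
  have h4 : cser^4 - (cT k)^4 = (X:S)^(k+1) * (d*(cser^3 + cser^2*(cT k) + cser*(cT k)^2 + (cT k)^3)) := by
    rw [show cser^4 - (cT k)^4 = (cser - cT k)*(cser^3 + cser^2*(cT k) + cser*(cT k)^2 + (cT k)^3) by ring, hd]
    ring
  have e1 : coeff (R := ℝ) k cser = coeff (R := ℝ) k (cT (k+1)) := by
    rw [coeff_cser, cT_stab (Nat.le_succ k)]
  have hdvd : (X:S)^(k+1) ∣ (1 + X*cser^4) - (1 + X*(cT k)^4) :=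
    ⟨X * (d*(cser^3 + cser^2*(cT k) + cser*(cT k)^2 + (cT k)^3)), by
      rw [show (1 + X*cser^4) - (1 + X*(cT k)^4) = X * (cser^4 - (cT k)^4) by ring, h4]; ring⟩
  rw [PowerSeries.X_pow_dvd_iff] at hdvd
  have e2 := hdvd k (Nat.lt_succ_self k)
  rw [map_sub, sub_eq_zero] at e2
  rw [e1]
  show coeff (R := ℝ) k (1 + X*(cT k)^4) = _
  exact e2.symm

lemma cc_cser : constantCoeff (R := ℝ) cser = 1 := by
  have := congrArg (constantCoeff (R := ℝ)) hc
  simpa using this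

abbrev D := PowerSeries.derivative ℝ

lemma D_ofNat (n : ℕ) [n.AtLeastTwo] : D (no_index (OfNat.ofNat n) : S) = 0 := by
  rw [← map_ofNat (C (R := ℝ)) n, PowerSeries.derivative_C]

lemma D_one : D (1 : S) = 0 := by
  rw [← map_one (C (R := ℝ)), PowerSeries.derivative_C]

lemma Dmulpow (f u : S) : ∀ m : ℕ, D (f * u^(m+1)) = u^(m+1) * D f + ((m:S)+1)*f*u^m*(D u) := by
  intro m
  induction m generalizing f with
  | zero =>
    rw [pow_one, Derivation.leibniz]
    simp only [smul_eq_mul]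
    ring
  | succ m ih =>
    have h1 : f * u^(m+1+1) = (f*u) * u^(m+1) := by ring
    rw [h1, ih (f*u), Derivation.leibniz]
    simp only [smul_eq_mul]
    push_cast
    ring

lemma coeff_X_mul_D (m : ℕ) (f : S) : coeff (R := ℝ) m (X * D f) = m * coeff (R := ℝ) m f := by
  cases m with
  | zero => simp
  | succ m =>
    rw [coeff_succ_X_mul, PowerSeries.coeff_derivative]
    push_cast
    ring

lemma coeff_natmul (a m : ℕ) (f : S) : coeff (R := ℝ) m ((a:S) * f) = a * coeff (R := ℝ) m f := by
  rw [← map_natCast (C (R := ℝ)) a, coeff_C_mul]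

-- test the derivative simp workflow on a sample polynomial in X, c
example (c : S) : D (2*c^2 - c^3 + 4*X^2*c) =
    (8*X*c) + (4*c - 3*c^2 + 4*X^2) * (D c) := by
  simp only [map_sub, map_add, Derivation.leibniz, Derivation.leibniz_pow,
    PowerSeries.derivative_X, D_ofNat, smul_eq_mul]
  push_cast
  ring


def f1 : S := X * D (2*cser^2 - cser^3)
lemma f1_def : f1 = X * D (2*cser^2 - cser^3) := rfl
def f2 : S := X * D f1
lemma f2_def : f2 = X * D f1 := rfl
def f3 : S := X * D f2
lemma f3_def : f3 = X * D f2 := rfl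
def f4 : S := X * D f3
lemma f4_def : f4 = X * D f3 := rfl

lemma hdc : (D cser) * (1 - 4*X*cser^3) = cser^4 := by
  have h := congrArg (fun z : S => D z) hc
  simp only [map_add, D_one, Derivation.leibniz, Derivation.leibniz_pow,
    PowerSeries.derivative_X, smul_eq_mul, nsmul_eq_mul] at h
  push_cast at h
  linear_combination h

lemma hdu : D (1 - 4*X*cser^3) = -(4*cser^3) - 12*X*cser^2*(D cser) := by
  simp only [map_sub, map_add, map_neg, Derivation.leibniz, Derivation.leibniz_pow,
    PowerSeries.derivative_X, D_ofNat, D_one, smul_eq_mul, nsmul_eq_mul]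
  push_cast
  ring

lemma hdN0 : D (2*cser^2 - cser^3) = (4:S)*cser*(D cser) + (-3:S)*cser^2*(D cser) := by
  simp only [map_sub, map_add, map_neg, Derivation.leibniz, Derivation.leibniz_pow,
    PowerSeries.derivative_X, D_ofNat, D_one, smul_eq_mul, nsmul_eq_mul]
  push_cast
  ring

lemma hF1 : f1 * (1 - 4*X*cser^3) = (4:S)*X*cser^5 + (-3:S)*X*cser^6 := by
  rw [f1_def]
  linear_combination (X*(1 - 4*X*cser^3))*hdN0 + ((4:S)*X*cser + (-3:S)*X*cser^2)*hdc

lemma hdN1 : D ((4:S)*X*cser^5 + (-3:S)*X*cser^6) = (4:S)*cser^5 + (-3:S)*cser^6 + (20:S)*X*cser^4*(D cser) + (-18:S)*X*cser^5*(D cser) := by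
  simp only [map_sub, map_add, map_neg, Derivation.leibniz, Derivation.leibniz_pow,
    PowerSeries.derivative_X, D_ofNat, D_one, smul_eq_mul, nsmul_eq_mul]
  push_cast
  ring

lemma hF2 : f2 * (1 - 4*X*cser^3)^3 = (4:S)*X*cser^5 + (-3:S)*X*cser^6 + (4:S)*X^2*cser^8 + (-6:S)*X^2*cser^9 + (-32:S)*X^3*cser^11 + (36:S)*X^3*cser^12 := by
  have ds := Dmulpow f1 (1 - 4*X*cser^3) 0
  simp only [Nat.reduceAdd, zero_add, pow_zero, pow_one, mul_one, one_mul] at ds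
  rw [hF1] at ds
  rw [hdN1] at ds
  rw [f2_def]
  linear_combination (-(X*(1 - 4*X*cser^3)^2))*ds + (-(X*f1) + (8:S)*X^2*cser^3*f1 + (-16:S)*X^3*cser^6*f1)*hdu + ((4:S)*X*cser^3 + (12:S)*X^2*cser^2*(D cser) + (-16:S)*X^2*cser^6 + (-48:S)*X^3*cser^5*(D cser))*hF1 + ((20:S)*X^2*cser^4 + (-18:S)*X^2*cser^5 + (-32:S)*X^3*cser^7 + (36:S)*X^3*cser^8)*hdc

lemma hdN2 : D ((4:S)*X*cser^5 + (-3:S)*X*cser^6 + (4:S)*X^2*cser^8 + (-6:S)*X^2*cser^9 + (-32:S)*X^3*cser^11 + (36:S)*X^3*cser^12) = (4:S)*cser^5 + (-3:S)*cser^6 + (20:S)*X*cser^4*(D cser) + (-18:S)*X*cser^5*(D cser) + (8:S)*X*cser^8 + (-12:S)*X*cser^9 + (32:S)*X^2*cser^7*(D cser) + (-54:S)*X^2*cser^8*(D cser) + (-96:S)*X^2*cser^11 + (108:S)*X^2*cser^12 + (-352:S)*X^3*cser^10*(D cser) + (432:S)*X^3*cser^11*(D cser) := by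
  simp only [map_sub, map_add, map_neg, Derivation.leibniz, Derivation.leibniz_pow,
    PowerSeries.derivative_X, D_ofNat, D_one, smul_eq_mul, nsmul_eq_mul]
  push_cast
  ring

lemma hF3 : f3 * (1 - 4*X*cser^3)^5 = (4:S)*X*cser^5 + (-3:S)*X*cser^6 + (44:S)*X^2*cser^8 + (-42:S)*X^2*cser^9 + (-144:S)*X^3*cser^11 + (138:S)*X^3*cser^12 + (-16:S)*X^4*cser^14 + (96:S)*X^4*cser^15 + (256:S)*X^5*cser^17 + (-432:S)*X^5*cser^18 := by
  have ds := Dmulpow f2 (1 - 4*X*cser^3) 2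
  simp only [Nat.reduceAdd, zero_add, pow_zero, pow_one, mul_one, one_mul] at ds
  rw [hF2] at ds
  rw [hdN2] at ds
  rw [f3_def]
  linear_combination (-(X*(1 - 4*X*cser^3)^2))*ds + ((-3:S)*X*f2 + (48:S)*X^2*cser^3*f2 + (-288:S)*X^3*cser^6*f2 + (768:S)*X^4*cser^9*f2 + (-768:S)*X^5*cser^12*f2)*hdu + ((12:S)*X*cser^3 + (36:S)*X^2*cser^2*(D cser) + (-48:S)*X^2*cser^6 + (-144:S)*X^3*cser^5*(D cser))*hF2 + ((20:S)*X^2*cser^4 + (-18:S)*X^2*cser^5 + (96:S)*X^3*cser^7 + (-90:S)*X^3*cser^8 + (-336:S)*X^4*cser^10 + (432:S)*X^4*cser^11 + (256:S)*X^5*cser^13 + (-432:S)*X^5*cser^14)*hdc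

lemma hdN3 : D ((4:S)*X*cser^5 + (-3:S)*X*cser^6 + (44:S)*X^2*cser^8 + (-42:S)*X^2*cser^9 + (-144:S)*X^3*cser^11 + (138:S)*X^3*cser^12 + (-16:S)*X^4*cser^14 + (96:S)*X^4*cser^15 + (256:S)*X^5*cser^17 + (-432:S)*X^5*cser^18) = (4:S)*cser^5 + (-3:S)*cser^6 + (20:S)*X*cser^4*(D cser) + (-18:S)*X*cser^5*(D cser) + (88:S)*X*cser^8 + (-84:S)*X*cser^9 + (352:S)*X^2*cser^7*(D cser) + (-378:S)*X^2*cser^8*(D cser) + (-432:S)*X^2*cser^11 + (414:S)*X^2*cser^12 + (-1584:S)*X^3*cser^10*(D cser) + (1656:S)*X^3*cser^11*(D cser) + (-64:S)*X^3*cser^14 + (384:S)*X^3*cser^15 + (-224:S)*X^4*cser^13*(D cser) + (1440:S)*X^4*cser^14*(D cser) + (1280:S)*X^4*cser^17 + (-2160:S)*X^4*cser^18 + (4352:S)*X^5*cser^16*(D cser) + (-7776:S)*X^5*cser^17*(D cser) := by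
  simp only [map_sub, map_add, map_neg, Derivation.leibniz, Derivation.leibniz_pow,
    PowerSeries.derivative_X, D_ofNat, D_one, smul_eq_mul, nsmul_eq_mul]
  push_cast
  ring

lemma hF4 : f4 * (1 - 4*X*cser^3)^7 = (4:S)*X*cser^5 + (-3:S)*X*cser^6 + (156:S)*X^2*cser^8 + (-138:S)*X^2*cser^9 + (-48:S)*X^3*cser^12 + (-1952:S)*X^4*cser^14 + (2496:S)*X^4*cser^15 + (3552:S)*X^5*cser^17 + (-4632:S)*X^5*cser^18 + (-576:S)*X^6*cser^20 + (-672:S)*X^6*cser^21 + (-2048:S)*X^7*cser^23 + (5184:S)*X^7*cser^24 := by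
  have ds := Dmulpow f3 (1 - 4*X*cser^3) 4
  simp only [Nat.reduceAdd, zero_add, pow_zero, pow_one, mul_one, one_mul] at ds
  rw [hF3] at ds
  rw [hdN3] at ds
  rw [f4_def]
  linear_combination (-(X*(1 - 4*X*cser^3)^2))*ds + ((-5:S)*X*f3 + (120:S)*X^2*cser^3*f3 + (-1200:S)*X^3*cser^6*f3 + (6400:S)*X^4*cser^9*f3 + (-19200:S)*X^5*cser^12*f3 + (30720:S)*X^6*cser^15*f3 + (-20480:S)*X^7*cser^18*f3)*hdu + ((20:S)*X*cser^3 + (60:S)*X^2*cser^2*(D cser) + (-80:S)*X^2*cser^6 + (-240:S)*X^3*cser^5*(D cser))*hF3 + ((20:S)*X^2*cser^4 + (-18:S)*X^2*cser^5 + (512:S)*X^3*cser^7 + (-486:S)*X^3*cser^8 + (-352:S)*X^4*cser^10 + (648:S)*X^4*cser^11 + (-2528:S)*X^5*cser^13 + (3096:S)*X^5*cser^14 + (4288:S)*X^6*cser^16 + (-7776:S)*X^6*cser^17 + (-2048:S)*X^7*cser^19 + (5184:S)*X^7*cser^20)*hdc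

lemma hGrand : (((6:ℕ):S)*f1 + ((33:ℕ):S)*f2 + ((54:ℕ):S)*f3 + ((27:ℕ):S)*f4) * (1 - 4*X*cser^3)^7
    = (X*(((120:ℕ):S)*(2*cser^2-cser^3) + ((616:ℕ):S)*f1 + ((1136:ℕ):S)*f2 + ((896:ℕ):S)*f3 + ((256:ℕ):S)*f4)) * (1 - 4*X*cser^3)^7 := by
  linear_combination ((6:S) + (-616:S)*X + (-144:S)*X*cser^3 + (14784:S)*X^2*cser^3 + (1440:S)*X^2*cser^6 + (-147840:S)*X^3*cser^6 + (-7680:S)*X^3*cser^9 + (788480:S)*X^4*cser^9 + (23040:S)*X^4*cser^12 + (-2365440:S)*X^5*cser^12 + (-36864:S)*X^5*cser^15 + (3784704:S)*X^6*cser^15 + (24576:S)*X^6*cser^18 + (-2523136:S)*X^7*cser^18)*hF1 + ((33:S) + (-1136:S)*X + (-528:S)*X*cser^3 + (18176:S)*X^2*cser^3 + (3168:S)*X^2*cser^6 + (-109056:S)*X^3*cser^6 + (-8448:S)*X^3*cser^9 + (290816:S)*X^4*cser^9 + (8448:S)*X^4*cser^12 + (-290816:S)*X^5*cser^12)*hF2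 + ((54:S) + (-896:S)*X + (-432:S)*X*cser^3 + (7168:S)*X^2*cser^3 + (864:S)*X^2*cser^6 + (-14336:S)*X^3*cser^6)*hF3 + ((27:S) + (-256:S)*X)*hF4 + ((240:S)*X*cser^2 + (120:S)*X*cser^3 + (120:S)*X*cser^4 + (-360:S)*X*cser^5 + (4896:S)*X^2*cser^5 + (-696:S)*X^2*cser^6 + (-816:S)*X^2*cser^7 + (-3240:S)*X^2*cser^8 + (4032:S)*X^3*cser^8 + (-576:S)*X^3*cser^9 + (120:S)*X^3*cser^10 + (9000:S)*X^3*cser^11 + (-6144:S)*X^4*cser^11 + (7296:S)*X^4*cser^12 + (7872:S)*X^4*cser^13 + (-3960:S)*X^4*cser^14 + (-6144:S)*X^5*cser^15 + (-13440:S)*X^5*cser^16 + (-4320:S)*X^5*cser^17 + (6144:S)*X^6*cser^19 + (2880:S)*X^6*cser^20)*hc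

lemma hI1 : cser^8 * ((1+X*(2*cser^2-cser^3))^2 - 8*X - 8*X^2*cser^4) = (2*cser^2-cser^3)^2 := by
  linear_combination ((4:S)*cser^4 + cser^6 + cser^7 + (4:S)*X*cser^8 + (4:S)*X*cser^9 + (-1:S)*X*cser^10)*hc

lemma hI2 : (-4)*X^2*cser^8 - 2*cser^4*((1+X*(2*cser^2-cser^3))^2 - 8*X - 8*X^2*cser^4)
    = 2*(2*cser^2-cser^3)*(1+X*(2*cser^2-cser^3)) - 4 := by
  linear_combination ((-4:S) + (-4:S)*cser + (-2:S)*cser^3 + (-4:S)*X*cser^4 + (-8:S)*X*cser^5 + (2:S)*X*cser^6)*hc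

lemma cc_pow_ne : ((1:S) - 4*X*cser^3)^7 ≠ 0 := by
  intro h
  have h2 : constantCoeff (R := ℝ) (((1:S) - 4*X*cser^3)^7) = 1 := by
    rw [map_pow, map_sub]
    simp [constantCoeff_X]
  rw [h] at h2
  simp at h2

lemma hODE : (((6:ℕ):S)*f1 + ((33:ℕ):S)*f2 + ((54:ℕ):S)*f3 + ((27:ℕ):S)*f4)
    = X*(((120:ℕ):S)*(2*cser^2-cser^3) + ((616:ℕ):S)*f1 + ((1136:ℕ):S)*f2 + ((896:ℕ):S)*f3 + ((256:ℕ):S)*f4) :=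
  mul_right_cancel₀ cc_pow_ne hGrand

lemma coeff_f1 (m : ℕ) : coeff (R := ℝ) m f1 = m * coeff (R := ℝ) m (2*cser^2 - cser^3) := by
  rw [f1_def, coeff_X_mul_D]
lemma coeff_f2 (m : ℕ) : coeff (R := ℝ) m f2 = m * coeff (R := ℝ) m f1 := by
  rw [f2_def, coeff_X_mul_D]
lemma coeff_f3 (m : ℕ) : coeff (R := ℝ) m f3 = m * coeff (R := ℝ) m f2 := by
  rw [f3_def, coeff_X_mul_D]
lemma coeff_f4 (m : ℕ) : coeff (R := ℝ) m f4 = m * coeff (R := ℝ) m f3 := by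
  rw [f4_def, coeff_X_mul_D]

lemma hRec (n : ℕ) : ((n:ℝ)+2)*(3*n+3)*(3*n+4)*(3*n+5) * coeff (R := ℝ) (n+1) (2*cser^2-cser^3)
    = ((4*(n:ℝ)+2)*(4*n+3)*(4*n+4)*(4*n+5)) * coeff (R := ℝ) n (2*cser^2-cser^3) := by
  have h := congrArg (coeff (R := ℝ) (n+1)) hODE
  rw [coeff_succ_X_mul] at h
  simp only [map_add, coeff_natmul, coeff_f4, coeff_f3, coeff_f2, coeff_f1] at h
  push_cast at h
  linear_combination h

def Aco (n : ℕ) : ℝ := 2*(Nat.factorial (4*n+1)) / ((Nat.factorial (n+1)) * (Nat.factorial (3*n+2)))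

lemma Aco_rec (n : ℕ) : ((n:ℝ)+2)*(3*n+3)*(3*n+4)*(3*n+5) * Aco (n+1)
    = ((4*(n:ℝ)+2)*(4*n+3)*(4*n+4)*(4*n+5)) * Aco n := by
  unfold Aco
  rw [show (4*(n+1)+1) = ((((4*n+1)+1)+1)+1)+1 by ring,
    Nat.factorial_succ ((((4*n+1)+1)+1)+1), Nat.factorial_succ (((4*n+1)+1)+1),
    Nat.factorial_succ ((4*n+1)+1), Nat.factorial_succ (4*n+1),
    show (3*(n+1)+2) = (((3*n+2)+1)+1)+1 by ring,
    Nat.factorial_succ (((3*n+2)+1)+1), Nat.factorial_succ ((3*n+2)+1),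
    Nat.factorial_succ (3*n+2), Nat.factorial_succ (n+1)]
  have hn1 : ((Nat.factorial (n+1) : ℝ)) ≠ 0 := Nat.cast_ne_zero.mpr (Nat.factorial_ne_zero _)
  have hn2 : ((Nat.factorial (3*n+2) : ℝ)) ≠ 0 := Nat.cast_ne_zero.mpr (Nat.factorial_ne_zero _)
  have hn3 : ((n:ℝ)+1+1) ≠ 0 := by positivity
  push_cast
  field_simp
  ring

lemma coeff_eq_Aco : ∀ n, coeff (R := ℝ) n (2*cser^2 - cser^3) = Aco n := by
  intro n
  induction n with
  | zero =>
    rw [coeff_zero_eq_constantCoeff]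
    simp [map_sub, map_mul, map_pow, map_ofNat, cc_cser, Aco, Nat.factorial]
    norm_num
  | succ n ih =>
    have h := hRec n
    rw [ih] at h
    have h2 := Aco_rec n
    have hne : ((n:ℝ)+2)*(3*n+3)*(3*n+4)*(3*n+5) ≠ 0 := by positivity
    exact mul_left_cancel₀ hne (h.trans h2.symm)

def tauSc : S := PowerSeries.mk fun i =>
  if i = 0 then 0 else 2*(Nat.factorial (4*i+1) : ℝ) / ((Nat.factorial (i+1) : ℝ) * (Nat.factorial (3*i+2) : ℝ))

lemma hAS : (1:S) + tauSc = 2*cser^2 - cser^3 := by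
  refine PowerSeries.ext fun n => ?_
  rw [coeff_eq_Aco]
  cases n with
  | zero =>
    simp [tauSc, Aco, Nat.factorial]
  | succ n =>
    rw [map_add, PowerSeries.coeff_one, if_neg (Nat.succ_ne_zero n)]
    have hmk : coeff (R := ℝ) (n+1) tauSc
        = if n+1 = 0 then 0 else 2*(Nat.factorial (4*(n+1)+1) : ℝ) / ((Nat.factorial ((n+1)+1) : ℝ) * (Nat.factorial (3*(n+1)+2) : ℝ)) := by
      simp [tauSc]
    rw [hmk, if_neg (Nat.succ_ne_zero n)]
    simp only [Aco]
    ring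


abbrev Rp := Polynomial ℝ
abbrev Tp := PowerSeries Rp
def half : Rp := Polynomial.C (2⁻¹ : ℝ)

lemma half_add : half + half = 1 := by
  simp only [half, ← Polynomial.C_add, ← Polynomial.C_1]
  norm_num

variable (w : Tp)

def sU : ℕ → Tp
  | 0 => 1
  | n+1 => sU n + C (R := Rp) half * (w - (sU n)^2)

lemma sU_dvd (hw : constantCoeff (R := Rp) w = 1) (n : ℕ) : (X:Tp)^(n+1) ∣ w - (sU w n)^2 := by
  induction n with
  | zero =>
    rw [pow_one, PowerSeries.X_dvd_iff]
    simp [sU, hw]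
  | succ n ih =>
    obtain ⟨d, hd⟩ := ih
    have hfac : w - (sU w (n+1))^2
        = (w - (sU w n)^2) * (1 - 2*(C (R := Rp) half)*(sU w n) - (C (R := Rp) half)^2*(w - (sU w n)^2)) := by
      simp only [sU]; ring
    have hXd : (X:Tp) ∣ (1 - 2*(C (R := Rp) half)*(sU w n) - (C (R := Rp) half)^2*(w - (sU w n)^2)) := by
      rw [PowerSeries.X_dvd_iff]
      have hccU : ∀ m, constantCoeff (R := Rp) (sU w m) = 1 := by
        intro m
        induction m with
        | zero => simp [sU]
        | succ m ih2 =>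
          simp only [sU, map_add, map_mul, map_sub, map_pow, ih2, constantCoeff_C, hw]
          ring
      have h2 : (2:Rp) * half = 1 := by
        have := half_add; rw [two_mul]; exact this
      simp only [map_sub, map_mul, map_pow, map_one, hccU, constantCoeff_C, hw,
        map_ofNat]
      linear_combination -half_add
    obtain ⟨e, he⟩ := hXd
    exact ⟨d * e, by rw [hfac, he, hd]; ring⟩

def ssq : Tp := PowerSeries.mk fun k => coeff (R := Rp) k (sU w k)

lemma sU_stab (hw : constantCoeff (R := Rp) w = 1) {k n : ℕ} (h : k ≤ n) :
    coeff (R := Rp) k (sU w n) = coeff (R := Rp) k (sU w k) := by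
  induction n with
  | zero => cases Nat.le_zero.mp h; rfl
  | succ n ih =>
    rcases Nat.lt_or_ge k (n+1) with h'|h'
    · have step : coeff (R := Rp) k (sU w (n+1)) = coeff (R := Rp) k (sU w n) := by
        have hd : (X:Tp)^(n+1) ∣ sU w (n+1) - sU w n := by
          obtain ⟨d, hd⟩ := sU_dvd w hw n
          exact ⟨C (R := Rp) half * d, by simp only [sU]; rw [hd]; ring⟩
        rw [PowerSeries.X_pow_dvd_iff] at hd
        have := hd k h'
        rwa [map_sub, sub_eq_zero] at this
      rw [step]; exact ih (by omega)
    · have : k = n+1 := by omega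
      subst this; rfl

lemma ssq_trunc (hw : constantCoeff (R := Rp) w = 1) (n : ℕ) : (X:Tp)^(n+1) ∣ ssq w - sU w n := by
  rw [PowerSeries.X_pow_dvd_iff]
  intro m hm
  rw [map_sub, show coeff (R := Rp) m (ssq w) = coeff (R := Rp) m (sU w m) from by simp [ssq],
    sU_stab w hw (Nat.lt_succ_iff.mp hm), sub_eq_zero]

lemma ssq_sq (hw : constantCoeff (R := Rp) w = 1) : (ssq w)^2 = w := by
  refine PowerSeries.ext fun k => ?_
  obtain ⟨d, hd⟩ := ssq_trunc w hw k
  obtain ⟨e, he⟩ := sU_dvd w hw k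
  have : (ssq w)^2 - w = (X:Tp)^(k+1) * (d * (ssq w + sU w k) - e) := by
    have expand : (ssq w)^2 - w = (ssq w - sU w k)*(ssq w + sU w k) - (w - (sU w k)^2) := by ring
    rw [expand, hd, he]; ring
  have h0 : coeff (R := Rp) k ((ssq w)^2 - w) = 0 := by
    rw [this]
    have : (X:Tp)^(k+1) ∣ (X:Tp)^(k+1) * (d * (ssq w + sU w k) - e) := Dvd.intro _ rfl
    rw [PowerSeries.X_pow_dvd_iff] at this
    exact this k (Nat.lt_succ_self k)
  rw [map_sub, sub_eq_zero] at h0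
  exact h0

lemma ssq_coeff_zero : coeff (R := Rp) 0 (ssq w) = 1 := by
  simp [ssq, sU]

lemma sU_deg (hwdeg : ∀ l, (coeff (R := Rp) l w).degree ≤ (l:ℕ)) (n : ℕ) :
    ∀ l, (coeff (R := Rp) l (sU w n)).degree ≤ (l:ℕ) := by
  induction n with
  | zero =>
    intro l
    simp only [sU, coeff_one]
    split_ifs with h
    · exact le_trans Polynomial.degree_one_le (by exact_mod_cast Nat.cast_nonneg' l)
    · simp
  | succ n ih =>
    intro l
    simp only [sU, map_add, map_sub]
    refine le_trans (Polynomial.degree_add_le _ _) (max_le (ih l) ?_)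
    have hC : coeff (R := Rp) l (C (R := Rp) half * (w - sU w n ^ 2)) = half * (coeff (R := Rp) l w - coeff (R := Rp) l ((sU w n)^2)) := by
      rw [coeff_C_mul, map_sub]
    rw [hC]
    refine le_trans (Polynomial.degree_mul_le _ _) ?_
    have hhd : (half : Rp).degree ≤ 0 := Polynomial.degree_C_le
    have hsq : ((coeff (R := Rp) l) ((sU w n)^2)).degree ≤ (l:ℕ) := by
      rw [pow_two, PowerSeries.coeff_mul]
      refine le_trans (Polynomial.degree_sum_le _ _) ?_
      rw [Finset.sup_le_iff]
      rintro ⟨i,j⟩ hij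
      refine le_trans (Polynomial.degree_mul_le _ _) ?_
      have hij' : i + j = l := by
        simpa using (Finset.HasAntidiagonal.mem_antidiagonal).mp hij
      calc ((coeff (R := Rp) i) (sU w n)).degree + ((coeff (R := Rp) j) (sU w n)).degree
          ≤ (i:ℕ) + (j:ℕ) := add_le_add (ih i) (ih j)
        _ = ((l:ℕ) : WithBot ℕ) := by rw [← hij']; push_cast; rfl
    have : ((coeff (R := Rp) l) w - (coeff (R := Rp) l) ((sU w n)^2)).degree ≤ (l:ℕ) :=
      le_trans (Polynomial.degree_sub_le _ _) (max_le (hwdeg l) hsq)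
    calc (half:Rp).degree + ((coeff (R := Rp) l) w - (coeff (R := Rp) l) ((sU w n)^2)).degree
        ≤ 0 + ((l:ℕ) : WithBot ℕ) := add_le_add hhd this
      _ = ((l:ℕ) : WithBot ℕ) := by simp

lemma ssq_deg (hwdeg : ∀ l, (coeff (R := Rp) l w).degree ≤ (l:ℕ)) (l : ℕ) :
    (coeff (R := Rp) l (ssq w)).degree ≤ (l:ℕ) := by
  rw [show coeff (R := Rp) l (ssq w) = coeff (R := Rp) l (sU w l) from by simp [ssq]]
  exact sU_deg w hwdeg l l


def Ms : S →+* Tp := PowerSeries.map (Polynomial.C)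
def sP : Tp := PowerSeries.C (R := Rp) Polynomial.X
def aT : Tp := Ms cser
def betaSc : S := (1+X*(2*cser^2-cser^3))^2 - 8*X - 8*X^2*cser^4
def wT : Tp := Ms betaSc - 4*(X^2*sP)

lemma MsX : Ms X = X := by simp [Ms]
lemma hI1m : aT^8 * ((1+X*(2*aT^2-aT^3))^2 - 8*X - 8*X^2*aT^4) = (2*aT^2-aT^3)^2 := by
  have h := congrArg Ms hI1
  simpa only [map_mul, map_add, map_sub, map_pow, map_one, map_ofNat, MsX, aT] using h
lemma hI2m : (-4)*X^2*aT^8 - 2*aT^4*((1+X*(2*aT^2-aT^3))^2 - 8*X - 8*X^2*aT^4)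
    = 2*(2*aT^2-aT^3)*(1+X*(2*aT^2-aT^3)) - 4 := by
  have h := congrArg Ms hI2
  simpa only [map_mul, map_add, map_sub, map_pow, map_one, map_ofNat, map_neg, MsX, aT] using h

lemma hMsbeta : Ms betaSc = (1+X*(2*aT^2-aT^3))^2 - 8*X - 8*X^2*aT^4 := by
  simp only [betaSc, map_mul, map_add, map_sub, map_pow, map_one, map_ofNat, MsX, aT]

lemma hCubic : (aT^4 - sP)^2 * wT
    = ((2*aT^2-aT^3)*(1+X*sP) + sP)^2 - 4*sP*(1+X*sP)^2 := by
  rw [wT, hMsbeta]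
  linear_combination hI1m + sP*hI2m

lemma cc_aT : constantCoeff (R := Rp) aT = 1 := by
  rw [aT, Ms, ← coeff_zero_eq_constantCoeff, PowerSeries.coeff_map,
    coeff_zero_eq_constantCoeff, cc_cser, map_one]

lemma cc_wT : constantCoeff (R := Rp) wT = 1 := by
  rw [wT, hMsbeta]
  simp only [map_sub, map_add, map_mul, map_pow, map_one, map_ofNat, constantCoeff_X, cc_aT, sP,
    constantCoeff_C]
  ring

lemma wT_deg : ∀ l : ℕ, (coeff (R := Rp) l wT).degree ≤ (l:ℕ) := by
  intro l
  rw [wT, map_sub]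
  refine le_trans (Polynomial.degree_sub_le _ _) (max_le ?_ ?_)
  · rw [Ms, PowerSeries.coeff_map]
    exact le_trans Polynomial.degree_C_le (by exact_mod_cast Nat.cast_nonneg' l)
  · have h4 : (4:Tp)*((X:Tp)^2*sP) = X^2 * PowerSeries.C (R := Rp) (Polynomial.C (4:ℝ) * Polynomial.X) := by
      have : PowerSeries.C (R := Rp) (Polynomial.C (4:ℝ) * Polynomial.X) = 4 * sP := by
        rw [map_mul, map_ofNat Polynomial.C 4, map_ofNat]
        rfl
      rw [this]; ring
    rw [h4]
    match l with
    | 0 => simp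
    | 1 =>
      have : coeff (R := Rp) 1 ((X:Tp)^2 * PowerSeries.C (R := Rp) (Polynomial.C (4:ℝ) * Polynomial.X)) = 0 := by
        rw [PowerSeries.coeff_X_pow_mul']
        simp
      rw [this]; simp
    | (d+2) =>
      rw [show d+2 = d+2 from rfl, PowerSeries.coeff_X_pow_mul]
      rw [PowerSeries.coeff_C]
      split_ifs with h
      · refine le_trans (Polynomial.degree_mul_le _ _) ?_
        have : (Polynomial.C (4:ℝ)).degree + (Polynomial.X : Rp).degree ≤ 0 + 1 :=
          add_le_add Polynomial.degree_C_le Polynomial.degree_X_le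
        refine le_trans this ?_
        norm_num
        exact_mod_cast Nat.le_add_left 1 (d+1)
      · simp

lemma Ms0_deg : ∀ i : ℕ, (coeff (R := Rp) i (Ms (cser^4) - sP)).degree ≤ (1:ℕ) := by
  intro i
  rw [map_sub]
  refine le_trans (Polynomial.degree_sub_le _ _) (max_le ?_ ?_)
  · rw [Ms, PowerSeries.coeff_map]
    exact le_trans Polynomial.degree_C_le (by norm_num)
  · rw [sP, PowerSeries.coeff_C]
    split_ifs
    · exact Polynomial.degree_X_le
    · simp

def bP : Tp := sP + (Ms (cser^4) - sP) * ssq wT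

lemma bP_coeff_zero : coeff (R := Rp) 0 bP = 1 := by
  rw [bP, map_add]
  rw [show coeff (R := Rp) 0 ((Ms (cser^4) - sP) * ssq wT)
      = constantCoeff (R := Rp) (Ms (cser^4) - sP) * constantCoeff (R := Rp) (ssq wT) by
    rw [coeff_zero_eq_constantCoeff, map_mul]]
  have h1 : constantCoeff (R := Rp) (Ms (cser^4) - sP) = 1 - Polynomial.X := by
    rw [map_sub, Ms, ← coeff_zero_eq_constantCoeff, PowerSeries.coeff_map,
      coeff_zero_eq_constantCoeff, map_pow, cc_cser]
    simp [sP, constantCoeff_C]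
  have h2 : constantCoeff (R := Rp) (ssq wT) = 1 := by
    rw [← coeff_zero_eq_constantCoeff, ssq_coeff_zero]
  rw [h1, h2, sP, PowerSeries.coeff_zero_C]
  ring

lemma bP_deg (l : ℕ) : (coeff (R := Rp) l bP).degree ≤ ((2*l : ℕ) : ℕ) := by
  match l with
  | 0 => rw [bP_coeff_zero]; exact le_trans Polynomial.degree_one_le (by norm_num)
  | (n+1) =>
    rw [bP, map_add]
    have hsP : coeff (R := Rp) (n+1) sP = 0 := by
      rw [sP, PowerSeries.coeff_C, if_neg (Nat.succ_ne_zero n)]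
    rw [hsP, zero_add, PowerSeries.coeff_mul]
    refine le_trans (Polynomial.degree_sum_le _ _) ?_
    rw [Finset.sup_le_iff]
    rintro ⟨i,j⟩ hij
    have hij' : i + j = n+1 := by simpa using (Finset.HasAntidiagonal.mem_antidiagonal).mp hij
    refine le_trans (Polynomial.degree_mul_le _ _) ?_
    have h1 := Ms0_deg i
    have h2 : ((coeff (R := Rp) j) (ssq wT)).degree ≤ (j:ℕ) := ssq_deg wT wT_deg j
    refine le_trans (add_le_add h1 h2) ?_
    have : (1:ℕ) + (j:ℕ) ≤ (2*(n+1) : ℕ) := by omega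
    exact_mod_cast this



def Φm : Tp →+* PowerSeries (PowerSeries ℝ) :=
  PowerSeries.map (Polynomial.coeToPowerSeries.ringHom)

lemma Φm_M (y : S) : Φm (Ms y) = PowerSeries.map (PowerSeries.C (R := ℝ)) y := by
  refine PowerSeries.ext fun n => ?_
  rw [Φm, PowerSeries.coeff_map, Ms, PowerSeries.coeff_map, PowerSeries.coeff_map,
    Polynomial.coeToPowerSeries.ringHom_apply, Polynomial.coe_C]

lemma Φm_sP : Φm sP = sVar := by
  rw [Φm, sP, PowerSeries.map_C, Polynomial.coeToPowerSeries.ringHom_apply, Polynomial.coe_X]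
  rfl

lemma Φm_X : Φm X = lVar := by simp [Φm, lVar]

lemma htau_map : PowerSeries.map (PowerSeries.C (R := ℝ)) tauSc = tutteSeries := by
  refine PowerSeries.ext fun n => ?_
  rw [PowerSeries.coeff_map]
  simp [tauSc, tutteSeries, apply_ite (PowerSeries.C (R := ℝ))]

lemma coeff0_prod : coeff (R := Rp) 0 ((Ms (cser^4) - sP) * ssq wT) = 1 - Polynomial.X := by
  rw [show coeff (R := Rp) 0 ((Ms (cser^4) - sP) * ssq wT)
      = constantCoeff (R := Rp) (Ms (cser^4) - sP) * constantCoeff (R := Rp) (ssq wT) by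
    rw [coeff_zero_eq_constantCoeff, map_mul]]
  have h1 : constantCoeff (R := Rp) (Ms (cser^4) - sP) = 1 - Polynomial.X := by
    rw [map_sub, Ms, ← coeff_zero_eq_constantCoeff, PowerSeries.coeff_map,
      coeff_zero_eq_constantCoeff, map_pow, cc_cser]
    simp [sP, constantCoeff_C]
  have h2 : constantCoeff (R := Rp) (ssq wT) = 1 := by
    rw [← coeff_zero_eq_constantCoeff, ssq_coeff_zero]
  rw [h1, h2, mul_one]

lemma haT : (2*aT^2 - aT^3 : Tp) = Ms ((1:S)+tauSc) := by
  rw [hAS, aT]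
  simp only [map_sub, map_mul, map_pow, map_ofNat]

theorem b_series_coeffs_are_polynomials
    (inv r g b : PowerSeries (PowerSeries ℝ))
    (hinv : (1 + lVar * sVar) * inv = 1)
    (hr : r = sVar * inv + tutteSeries)
    (hg1 : PowerSeries.constantCoeff (R := ℝ)
      (PowerSeries.constantCoeff (R := PowerSeries ℝ) g) = 1)
    (hg2 : g ^ 2 = (1 + r) ^ 2 - 4 * sVar)
    (hb : b = sVar + (1 + lVar * sVar) * g) :
    ∀ l : ℕ, ∃ p : Polynomial ℝ,
      p.degree ≤ (2 * l : ℕ) ∧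
      (p : PowerSeries ℝ) = PowerSeries.coeff (R := PowerSeries ℝ) l b := by
  intro l
  have hm1 : PowerSeries.map (PowerSeries.C (R := ℝ)) ((1:S) + tauSc) = 1 + tutteSeries := by
    rw [map_add, map_one, htau_map]
  have hQ : (1 + lVar * sVar) * (1 + r) = (1 + tutteSeries) * (1 + lVar*sVar) + sVar := by
    rw [hr]
    linear_combination sVar * hinv
  set Zt : PowerSeries (PowerSeries ℝ) := Φm ((Ms (cser^4) - sP) * ssq wT) with hZt
  set gt : PowerSeries (PowerSeries ℝ) := inv * Zt with hgtdef
  have hZeq : (1 + lVar*sVar) * gt = Zt := by rw [hgtdef, ← mul_assoc, hinv, one_mul]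
  have e1 : Zt^2 = Φm ((Ms (cser^4) - sP)^2 * wT) := by
    rw [hZt, ← map_pow,
      show ((Ms (cser^4) - sP) * ssq wT)^2 = (Ms (cser^4) - sP)^2 * (ssq wT)^2 from by ring,
      ssq_sq wT cc_wT]
  have hZsq : Zt^2 = ((1+tutteSeries)*(1+lVar*sVar)+sVar)^2 - 4*sVar*(1+lVar*sVar)^2 := by
    rw [e1, show Ms (cser^4) = aT^4 from by simp [aT], hCubic, haT]
    simp only [map_sub, map_add, map_mul, map_pow, map_one, map_ofNat, Φm_M, Φm_sP, Φm_X, hm1, htau_map]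
  have hunit : (1 + lVar*sVar) ≠ (0 : PowerSeries (PowerSeries ℝ)) := by
    intro h
    have h2 : constantCoeff (R := PowerSeries ℝ) (1 + lVar*sVar) = 1 := by
      simp [lVar, map_mul, constantCoeff_X]
    rw [h, map_zero] at h2
    exact one_ne_zero h2.symm
  have h1 : ((1+lVar*sVar)*gt)^2 = (1+lVar*sVar)^2 * ((1+r)^2 - 4*sVar) := by
    rw [hZeq, hZsq]
    linear_combination (-(((1+tutteSeries)*(1+lVar*sVar)+sVar) + (1+lVar*sVar)*(1+r))) * hQ
  have hgt2 : gt^2 = (1+r)^2 - 4*sVar := by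
    have hcancel : (1+lVar*sVar)^2 * (gt^2 - ((1+r)^2 - 4*sVar)) = 0 := by
      linear_combination h1
    rcases mul_eq_zero.mp hcancel with h|h
    · exact absurd h (pow_ne_zero 2 hunit)
    · exact sub_eq_zero.mp h
  have hccZ : constantCoeff (R := PowerSeries ℝ) Zt = 1 - PowerSeries.X := by
    rw [hZt, Φm, ← coeff_zero_eq_constantCoeff, PowerSeries.coeff_map, coeff0_prod]
    rw [Polynomial.coeToPowerSeries.ringHom_apply]
    push_cast
    norm_num
  have hccgt : constantCoeff (R := ℝ) (constantCoeff (R := PowerSeries ℝ) gt) = 1 := by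
    have h0 := congrArg (constantCoeff (R := PowerSeries ℝ)) hZeq
    rw [map_mul, map_add, map_one, map_mul] at h0
    rw [show constantCoeff (R := PowerSeries ℝ) lVar = 0 from by simp [lVar]] at h0
    rw [hccZ] at h0
    have h3 : constantCoeff (R := PowerSeries ℝ) gt = 1 - PowerSeries.X := by
      rw [← h0]; ring
    rw [h3]
    simp [constantCoeff_X]
  have hfac : (g - gt) * (g + gt) = 0 := by linear_combination hg2 - hgt2
  have hgg : g = gt := by
    rcases mul_eq_zero.mp hfac with h|h
    · exact sub_eq_zero.mp h
    · exfalso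
      have h2 := congrArg (fun z => constantCoeff (R := ℝ) (constantCoeff (R := PowerSeries ℝ) z)) h
      simp only [map_add, map_zero] at h2
      rw [hg1, hccgt] at h2
      norm_num at h2
  have hbΦ : b = Φm bP := by
    rw [hb, hgg, hZeq, bP, map_add, Φm_sP]
  refine ⟨coeff (R := Rp) l bP, bP_deg l, ?_⟩
  rw [hbΦ, Φm, PowerSeries.coeff_map, Polynomial.coeToPowerSeries.ringHom_apply]


end
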